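/- For every type α, the group homomorphism from Equiv.Perm α to MulAut (FreeMagma α), sending a permutation σ to the automorphism of FreeMagma α induced by applying σ to generators (FreeMagma.map σ), is a group isomorphism; in particular the automorphism group of the free magma on r generators is isomorphic to the symmetric group Σ(r). (This is the paper's claim that for the free theory generated by one binary operation, the free model on a set has a unique basis, so its automorphism groups are symmetric groups.) -/

import Mathlib

/-- The multiplicative automorphism of the free magma induced by applying a
permutation `σ` to the generators. -/
def permMulAutFreeMagma (α : Type*) (σ : Equiv.Perm α) : MulAut (FreeMagma α) :=
  MulHom.toMulEquiv (FreeMagma.map σ) (FreeMagma.map σ.symm)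
    (by ext a; simp) (by ext a; simp)

/-- The group homomorphism `Equiv.Perm α →* MulAut (FreeMagma α)` sending a
permutation `σ` to the automorphism of `FreeMagma α` induced by applying `σ`
to the generators. -/
def permToFreeMagmaAut (α : Type*) : Equiv.Perm α →* MulAut (FreeMagma α) :=
  MonoidHom.mk' (permMulAutFreeMagma α) (by
    intro σ τ
    ext a
    simp only [permMulAutFreeMagma, MulAut.mul_apply, MulHom.toMulEquiv_apply]
    induction a with
    | ih1 a => simp
    | ih2 x y h1 h2 =>
        simp only [Equiv.Perm.coe_mul] at h1 h2
        simp [map_mul, h1, h2])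

lemma freeMagma_aut_of_mem {α : Type*} (f : MulAut (FreeMagma α)) (a : α) :
    ∃ b, f (FreeMagma.of a) = FreeMagma.of b := by
  cases h : f (FreeMagma.of a) with
  | of b => exact ⟨b, rfl⟩
  | mul x y =>
      exfalso
      have h2 : FreeMagma.of a = f.symm x * f.symm y := by
        have := congrArg f.symm h
        simpa [map_mul] using this
      cases h2

/-- The automorphism group of the free magma on a set is the symmetric group
on that set: the canonical group homomorphism `Equiv.Perm α →* MulAut (FreeMagma α)`
is a group isomorphism. -/
theorem permToFreeMagmaAut_bijective (α : Type*) :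
    Function.Bijective (permToFreeMagmaAut α) := by
  constructor
  · intro σ τ h
    ext a
    have := congrArg (fun f : MulAut (FreeMagma α) => f (FreeMagma.of a)) h
    simp [permToFreeMagmaAut, permMulAutFreeMagma] at this
    injection this
  · intro f
    choose g hg using freeMagma_aut_of_mem f
    choose g' hg' using freeMagma_aut_of_mem f.symm
    have hgg' : ∀ a, g' (g a) = a := by
      intro a
      have : f.symm (f (FreeMagma.of a)) = FreeMagma.of a := f.symm_apply_apply _
      rw [hg, hg'] at this
      injection this
    have hg'g : ∀ a, g (g' a) = a := by
      intro a
      have : f (f.symm (FreeMagma.of a)) = FreeMagma.of a := f.apply_symm_apply _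
      rw [hg', hg] at this
      injection this
    refine ⟨⟨g, g', hgg', hg'g⟩, ?_⟩
    ext e
    induction e with
    | ih1 a => simpa [permToFreeMagmaAut, permMulAutFreeMagma] using (hg a).symm
    | ih2 x y ihx ihy =>
        simp only [permToFreeMagmaAut, permMulAutFreeMagma, MonoidHom.mk'_apply,
          MulHom.toMulEquiv_apply] at *
        rw [show (x * y : FreeMagma α) = x * y from rfl, map_mul, map_mul, ihx, ihy]
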